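/- Let A, B, K, L, d_1, …, d_L ∈ ℕ satisfy A, B, K ≥ 1, A·B ≥ K, d_ℓ ≥ 2 for all ℓ, and Σ_{ℓ=1}^{L}(d_ℓ − 2) ≥ A. Then for any finite set X ⊂ [0, K) and any real numbers w_0, w_1, …, w_{A−1} ∈ ℝ, there exists a Step+Id network f with L hidden layers of widths d_1, …, d_L, input dimension 1 and output dimension 2, such that f(x) = (w_{⌊x/B⌋}, x − B·⌊x/B⌋) for all x ∈ X. -/

import Mathlib

open Real Filter

noncomputable section

/-- A sigmoidal activation function. -/
def Sigmoidal (σ : ℝ → ℝ) : Prop :=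
  (∃ a b : ℝ, Tendsto σ atBot (nhds a) ∧ Tendsto σ atTop (nhds b) ∧ a ≠ b) ∧
  (∃ z : ℝ, ContDiffAt ℝ 1 σ z ∧ deriv σ z ≠ 0)

/-- `f` is an affine map between finite-dimensional coordinate spaces. -/
def IsAffineVecMap {m n : ℕ} (t : (Fin m → ℝ) → (Fin n → ℝ)) : Prop :=
  ∃ (W : Matrix (Fin n) (Fin m) ℝ) (b : Fin n → ℝ), ∀ x, t x = W.mulVec x + b

/-- A `σ` network with hidden layer widths `ws`. -/
def IsNet (σ : ℝ → ℝ) : (din : ℕ) → (ws : List ℕ) → (dout : ℕ) →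
    ((Fin din → ℝ) → (Fin dout → ℝ)) → Prop
  | _, [], _, f => IsAffineVecMap f
  | din, d :: ds, dout, f =>
      ∃ (t : (Fin din → ℝ) → (Fin d → ℝ)) (g : (Fin d → ℝ) → (Fin dout → ℝ)),
        IsAffineVecMap t ∧ IsNet σ d ds dout g ∧ ∀ x, f x = g (fun i => σ (t x i))

/-- The binary threshold (step) function. -/
def stepFun (x : ℝ) : ℝ := if 0 ≤ x then 1 else 0

/-- A `Step`+`Id` network: each hidden neuron applies either `Step` or `Id`. -/
def IsStepIdNet : (din : ℕ) → (ws : List ℕ) → (dout : ℕ) →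
    ((Fin din → ℝ) → (Fin dout → ℝ)) → Prop
  | _, [], _, f => IsAffineVecMap f
  | din, d :: ds, dout, f =>
      ∃ (t : (Fin din → ℝ) → (Fin d → ℝ)) (φ : Fin d → Bool)
        (g : (Fin d → ℝ) → (Fin dout → ℝ)),
        IsAffineVecMap t ∧ IsStepIdNet d ds dout g ∧
        ∀ x, f x = g (fun i => if φ i then stepFun (t x i) else t x i)

/-- Number of parameters `Σ_ℓ d_{ℓ+1}(d_ℓ + 1)`. -/
def paramCount : (din : ℕ) → (ws : List ℕ) → (dout : ℕ) → ℕ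
  | din, [], dout => dout * (din + 1)
  | din, d :: ds, dout => d * (din + 1) + paramCount d ds dout

/-- Euclidean norm on `Fin d → ℝ`. -/
def eNorm {d : ℕ} (x : Fin d → ℝ) : ℝ := Real.sqrt (∑ i, (x i) ^ 2)

/-- Euclidean inner product. -/
def eDot {d : ℕ} (u v : Fin d → ℝ) : ℝ := ∑ i, u i * v i

/-- A finite set is `Δ`-separated: the largest pairwise distance is less than
`Δ` times the smallest pairwise distance. -/
def Separated (Δ : ℝ) {d : ℕ} (X : Finset (Fin d → ℝ)) : Prop :=
  ∀ x ∈ X, ∀ x' ∈ X, ∀ z ∈ X, ∀ z' ∈ X, x ≠ x' → z ≠ z' →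
    eNorm (x - x') < Δ * eNorm (z - z')

section Helpers

lemma aff_id {n : ℕ} : IsAffineVecMap (fun x : Fin n → ℝ => x) :=
  ⟨1, 0, fun x => by simp [Matrix.one_mulVec]⟩

lemma aff_comp {a b c : ℕ} {g : (Fin b → ℝ) → (Fin c → ℝ)} {h : (Fin a → ℝ) → (Fin b → ℝ)}
    (hg : IsAffineVecMap g) (hh : IsAffineVecMap h) :
    IsAffineVecMap (fun x => g (h x)) := by
  obtain ⟨W1, b1, h1⟩ := hg
  obtain ⟨W2, b2, h2⟩ := hh
  exact ⟨W1 * W2, W1.mulVec b2 + b1, fun x => by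
    simp [h1, h2, Matrix.mulVec_add, ← Matrix.mulVec_mulVec, add_assoc]⟩

lemma net_precomp {din dout e : ℕ} (ws : List ℕ) {g : (Fin din → ℝ) → (Fin dout → ℝ)}
    {h : (Fin e → ℝ) → (Fin din → ℝ)} (hg : IsStepIdNet din ws dout g)
    (hh : IsAffineVecMap h) : IsStepIdNet e ws dout (fun x => g (h x)) := by
  cases ws with
  | nil => exact aff_comp hg hh
  | cons d ds =>
    obtain ⟨t, φ, g', ht, hg', heq⟩ := hg
    exact ⟨fun x => t (h x), φ, g', aff_comp ht hh, hg', fun x => heq (h x)⟩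

lemma net_postcomp {din dout e : ℕ} (ws : List ℕ) {g : (Fin din → ℝ) → (Fin dout → ℝ)}
    {h : (Fin dout → ℝ) → (Fin e → ℝ)} (hg : IsStepIdNet din ws dout g)
    (hh : IsAffineVecMap h) : IsStepIdNet din ws e (fun x => h (g x)) := by
  induction ws generalizing din with
  | nil => exact aff_comp hh hg
  | cons d ds ih =>
    obtain ⟨t, φ, g', ht, hg', heq⟩ := hg
    exact ⟨t, φ, fun z => h (g' z), ht, ih hg', fun x => congrArg h (heq x)⟩

lemma nx_iff (B : ℕ) (hB : 1 ≤ B) (x : ℝ) (hx : 0 ≤ x) (a : ℕ) :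
    (a : ℝ) * B ≤ x ↔ a ≤ (⌊x / (B : ℝ)⌋).toNat := by
  have hBpos : (0 : ℝ) < B := by exact_mod_cast hB
  rw [Int.le_toNat (Int.floor_nonneg.mpr (by positivity)), Int.le_floor,
    le_div_iff₀ hBpos]
  push_cast
  rfl

lemma steq (B : ℕ) (hB : 1 ≤ B) (x : ℝ) (hx : 0 ≤ x) (m j : ℕ) :
    stepFun (x - (B : ℝ) * (min m (⌊x / (B : ℝ)⌋).toNat : ℕ) - ((j : ℝ) + 1) * B)
      = if m + j + 1 ≤ (⌊x / (B : ℝ)⌋).toNat then 1 else 0 := by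
  set n := (⌊x / (B : ℝ)⌋).toNat with hn
  have h1 : (0 : ℝ) ≤ x - (B : ℝ) * (min m n : ℕ) - ((j : ℝ) + 1) * B ↔
      (min m n + j + 1 : ℕ) ≤ n := by
    rw [← nx_iff B hB x hx]
    push_cast
    constructor <;> intro <;> linarith
  have h2 : (min m n + j + 1 ≤ n) ↔ (m + j + 1 ≤ n) := by omega
  by_cases hc : m + j + 1 ≤ n
  · rw [if_pos hc]; exact if_pos ((h1.trans h2).mpr hc)
  · rw [if_neg hc]; exact if_neg (fun h => hc ((h1.trans h2).mp h))

lemma L1sum (k m n : ℕ) :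
    (∑ j : Fin k, (if m + (j : ℕ) + 1 ≤ n then (1 : ℝ) else 0))
      = ((min (m + k) n : ℕ) : ℝ) - ((min m n : ℕ) : ℝ) := by
  induction k with
  | zero => simp
  | succ k ih =>
    rw [Fin.sum_univ_castSucc]
    simp only [Fin.coe_castSucc, Fin.val_last, ih]
    by_cases hc : m + k + 1 ≤ n
    · rw [if_pos hc]
      have : min (m + (k + 1)) n = min (m + k) n + 1 := by omega
      rw [this]; push_cast; ring
    · rw [if_neg hc]
      have : min (m + (k + 1)) n = min (m + k) n := by omega
      rw [this]; ring

lemma L2sum (w : ℕ → ℝ) (k m n : ℕ) :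
    (∑ j : Fin k, (if m + (j : ℕ) + 1 ≤ n then w (m + (j : ℕ) + 1) - w (m + (j : ℕ)) else 0))
      = w (min (m + k) n) - w (min m n) := by
  induction k with
  | zero => simp
  | succ k ih =>
    rw [Fin.sum_univ_castSucc]
    simp only [Fin.coe_castSucc, Fin.val_last, ih]
    by_cases hc : m + k + 1 ≤ n
    · rw [if_pos hc]
      have h1 : min (m + (k + 1)) n = m + k + 1 := by omega
      have h2 : min (m + k) n = m + k := by omega
      rw [h1, h2]; ring
    · rw [if_neg hc]
      have : min (m + (k + 1)) n = min (m + k) n := by omega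
      rw [this]; ring

end Helpers

lemma key (A B : ℕ) (hB : 1 ≤ B) (w : ℕ → ℝ) :
    ∀ (ws : List ℕ) (m : ℕ), (∀ d ∈ ws, 2 ≤ d) →
      A ≤ m + 1 + (ws.map (· - 2)).sum →
      ∃ g : (Fin 2 → ℝ) → (Fin 2 → ℝ), IsStepIdNet 2 ws 2 g ∧
        ∀ x : ℝ, 0 ≤ x → x < (A : ℝ) * B → ∀ v : Fin 2 → ℝ,
          v 0 = x - (B : ℝ) * ((min m (⌊x / (B : ℝ)⌋).toNat : ℕ) : ℝ) →
          v 1 = w (min m (⌊x / (B : ℝ)⌋).toNat) →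
          g v 0 = w ((⌊x / (B : ℝ)⌋).toNat) ∧
          g v 1 = x - (B : ℝ) * (((⌊x / (B : ℝ)⌋).toNat : ℕ) : ℝ) := by
  intro ws
  induction ws with
  | nil =>
    intro m _ hA
    refine ⟨fun v => ![v 1, v 0], ⟨fun l i => if l = i then 0 else 1, 0, ?_⟩, ?_⟩
    · intro v
      funext l
      fin_cases l <;>
        simp [Matrix.mulVec, dotProduct, Fin.sum_univ_two]
    intro x hx hxA v hv0 hv1
    have hn : (⌊x / (B : ℝ)⌋).toNat < A := by
      by_contra hcon
      push_neg at hcon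
      have := (nx_iff B hB x hx A).mpr hcon
      linarith
    have hmin : min m (⌊x / (B : ℝ)⌋).toNat = (⌊x / (B : ℝ)⌋).toNat := by
      simp at hA ⊢; omega
    rw [hmin] at hv0 hv1
    constructor
    · simpa using hv1
    · simpa using hv0
  | cons d rest ih =>
    intro m hws hA
    obtain ⟨k, rfl⟩ : ∃ k, d = k + 2 := ⟨d - 2, by have := hws d (by simp); omega⟩
    have hA' : A ≤ (m + k) + 1 + (rest.map (· - 2)).sum := by
      simp [List.map_cons] at hA; omega
    obtain ⟨g, hgnet, hgval⟩ := ih (m + k) (fun d hd => hws d (by simp [hd])) hA'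
    set t : (Fin 2 → ℝ) → (Fin (k + 2) → ℝ) := fun y i =>
      if (i : ℕ) = 0 then y 0 else if (i : ℕ) = 1 then y 1
      else y 0 - (((i : ℕ) - 1 : ℕ) : ℝ) * B with ht_def
    have ht : IsAffineVecMap t := by
      clear hgval hgnet ih hA hA' hws hB
      refine ⟨fun i l => if (i : ℕ) = 1 then (if l = 1 then 1 else 0)
          else (if l = 0 then 1 else 0),
        fun i => if (i : ℕ) = 0 then 0 else if (i : ℕ) = 1 then 0
          else -(((i : ℕ) - 1 : ℕ) : ℝ) * B, ?_⟩
      intro y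
      funext i
      have hmv2 : ∀ (M : Matrix (Fin (k+2)) (Fin 2) ℝ) (u : Fin 2 → ℝ) (i0 : Fin (k+2)),
          M.mulVec u i0 = M i0 0 * u 0 + M i0 1 * u 1 := fun M u i0 => by
        simp [Matrix.mulVec, dotProduct, Fin.sum_univ_two]
      rw [Pi.add_apply]; erw [hmv2]
      simp only [ht_def]
      split_ifs <;> first | omega | (simp_all; try ring)
    set φ : Fin (k + 2) → Bool := fun i => decide (2 ≤ (i : ℕ)) with hφ_def
    set W' : Matrix (Fin 2) (Fin (k + 2)) ℝ := fun l i =>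
      if (i : ℕ) = 0 then (if l = 0 then 1 else 0)
      else if (i : ℕ) = 1 then (if l = 1 then 1 else 0)
      else (if l = 0 then -(B : ℝ) else w (m + (i : ℕ) - 1) - w (m + (i : ℕ) - 2)) with hW'
    set h : (Fin (k + 2) → ℝ) → (Fin 2 → ℝ) := fun z => W'.mulVec z with hh_def
    have hh : IsAffineVecMap h := ⟨W', 0, fun z => by simp [hh_def]⟩
    refine ⟨fun y => g (h (fun i => if φ i then stepFun (t y i) else t y i)),
      ⟨t, φ, fun z => g (h z), ht, net_precomp rest hgnet hh, fun y => rfl⟩, ?_⟩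
    intro x hx hxA v hv0 hv1
    set n := (⌊x / (B : ℝ)⌋).toNat with hn
    set z : Fin (k + 2) → ℝ := fun i => if φ i then stepFun (t v i) else t v i with hz
    have hz0 : z 0 = v 0 := by
      simp only [hz, hφ_def, ht_def, Fin.val_zero]
      norm_num
    have hz1 : z 1 = v 1 := by
      simp only [hz, hφ_def, ht_def, Fin.val_one]
      norm_num
    have hzs : ∀ j : Fin k, z (j.succ.succ) =
        if m + (j : ℕ) + 1 ≤ n then 1 else 0 := by
      intro j
      have hjv : ((j.succ.succ : Fin (k + 2)) : ℕ) = (j : ℕ) + 2 := rfl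
      have hstep : z j.succ.succ = stepFun (v 0 - ((((j : ℕ) + 2) - 1 : ℕ) : ℝ) * B) := by
        simp [hz, hφ_def, ht_def, hjv]
      rw [hstep, hv0]
      have : ((((j : ℕ) + 2) - 1 : ℕ) : ℝ) = (j : ℝ) + 1 := by push_cast; ring
      rw [this]
      exact steq B hB x hx m j
    have expand : ∀ f : Fin (k + 2) → ℝ,
        ∑ i, f i = f 0 + f 1 + ∑ j : Fin k, f j.succ.succ := by
      intro f
      rw [Fin.sum_univ_succ, Fin.sum_univ_succ, ← add_assoc]
      rfl
    have hW00 : W' 0 0 = 1 := by simp [hW']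
    have hW01 : W' 0 1 = 0 := by simp [hW']
    have hW10 : W' 1 0 = 0 := by simp [hW']
    have hW11 : W' 1 1 = 1 := by simp [hW']
    have hWs0 : ∀ j : Fin k, W' 0 j.succ.succ = -(B : ℝ) := by
      intro j; simp [hW', Fin.val_succ]
    have hWs1 : ∀ j : Fin k, W' 1 j.succ.succ = w (m + (j : ℕ) + 1) - w (m + (j : ℕ)) := by
      intro j
      have hv2 : ((j.succ.succ : Fin (k + 2)) : ℕ) = (j : ℕ) + 2 := rfl
      simp only [hW', hv2]
      rw [if_neg (by omega), if_neg (by omega), if_neg (by decide : ¬(1 : Fin 2) = 0)]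
      rw [show m + ((j : ℕ) + 2) - 1 = m + (j : ℕ) + 1 from by omega,
        show m + ((j : ℕ) + 2) - 2 = m + (j : ℕ) from by omega]
    have e0 : ∑ j : Fin k, W' 0 j.succ.succ * z j.succ.succ
        = -(B : ℝ) * (((min (m + k) n : ℕ) : ℝ) - ((min m n : ℕ) : ℝ)) := by
      rw [← L1sum k m n, Finset.mul_sum]
      exact Finset.sum_congr rfl fun j _ => by rw [hzs j, hWs0 j]
    have e1 : ∑ j : Fin k, W' 1 j.succ.succ * z j.succ.succ
        = w (min (m + k) n) - w (min m n) := by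
      rw [← L2sum w k m n]
      refine Finset.sum_congr rfl fun j _ => ?_
      rw [hzs j, hWs1 j]
      split_ifs <;> simp
    have hmv : ∀ l, h z l = ∑ i, W' l i * z i := by
      intro l; simp [hh_def, Matrix.mulVec, dotProduct]
    have hsum0 : h z 0 = x - (B : ℝ) * ((min (m + k) n : ℕ) : ℝ) := by
      rw [hmv 0, expand, hz0, hz1, hv0, hW00, hW01, e0]
      ring
    have hsum1 : h z 1 = w (min (m + k) n) := by
      rw [hmv 1, expand, hz0, hz1, hv1, hW10, hW11, e1]
      ring
    exact hgval x hx hxA (h z) hsum0 hsum1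

/-- Lemma 11: extracting the parameter `w_{⌊x/B⌋}` and the
remainder `x mod B` with a Step+Id network. -/
theorem statement_16 (A B K : ℕ) (hA : 1 ≤ A) (hB : 1 ≤ B) (hK : 1 ≤ K)
    (hAB : K ≤ A * B) (ws : List ℕ) (hws : ∀ w ∈ ws, 2 ≤ w)
    (hsum : A ≤ (ws.map (· - 2)).sum)
    (X : Finset ℝ) (hX : ∀ x ∈ X, 0 ≤ x ∧ x < (K : ℝ)) (w : ℕ → ℝ) :
    ∃ f : (Fin 1 → ℝ) → (Fin 2 → ℝ), IsStepIdNet 1 ws 2 f ∧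
      ∀ x ∈ X, f (fun _ => x) 0 = w (⌊x / (B : ℝ)⌋.toNat) ∧
        f (fun _ => x) 1 = x - (B : ℝ) * (⌊x / (B : ℝ)⌋ : ℝ) := by
  obtain ⟨g, hgnet, hgval⟩ := key A B hB w ws 0 hws (by omega)
  have he : IsAffineVecMap
      (fun y : Fin 1 → ℝ => fun l : Fin 2 => if l = 0 then y 0 else w 0) := by
    refine ⟨fun l _ => if l = 0 then 1 else 0, fun l => if l = 0 then 0 else w 0, ?_⟩
    intro y
    funext l
    fin_cases l <;> simp [Matrix.mulVec, dotProduct, Fin.sum_univ_one]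
  refine ⟨fun y => g (fun l => if l = 0 then y 0 else w 0),
    net_precomp ws hgnet he, ?_⟩
  intro x hxX
  obtain ⟨hx0, hxK⟩ := hX x hxX
  have hKAB : (K : ℝ) ≤ (A : ℝ) * B := by exact_mod_cast hAB
  have hxAB : x < (A : ℝ) * B := lt_of_lt_of_le hxK hKAB
  have hfl : (0 : ℤ) ≤ ⌊x / (B : ℝ)⌋ := Int.floor_nonneg.mpr (by positivity)
  have hv0 : (fun l : Fin 2 => if l = 0 then x else w 0) 0
      = x - (B : ℝ) * ((min 0 (⌊x / (B : ℝ)⌋).toNat : ℕ) : ℝ) := by simp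
  have hv1 : (fun l : Fin 2 => if l = 0 then x else w 0) 1
      = w (min 0 (⌊x / (B : ℝ)⌋).toNat) := by simp
  obtain ⟨h0, h1⟩ := hgval x hx0 hxAB (fun l : Fin 2 => if l = 0 then x else w 0) hv0 hv1
  refine ⟨h0, ?_⟩
  have hcast : (((⌊x / (B : ℝ)⌋).toNat : ℕ) : ℝ) = ((⌊x / (B : ℝ)⌋ : ℤ) : ℝ) := by
    exact_mod_cast Int.toNat_of_nonneg hfl
  rw [hcast] at h1
  exact h1
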